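/- arXiv:2411.07526 — 2 statements merged into one kernel-verified Lean document; each statement's English description precedes it below -/
import Mathlib

section
/- If a stable sorting function f sorts a sequence S first by remainder keys r(s) = (s - min(S)) mod d and then by quotient keys q(s) = ⌊(s - min(S))/d⌋ (QR Sort), the resulting sequence is sorted in nondecreasing order. -/
theorem qr_sort_sorts (S : List ℤ) (d mn : ℤ) (hd : 0 < d)
    (hmn : S.minimum = (mn : WithTop ℤ)) :
    (((S.mergeSort (fun a b => decide ((a - mn) % d ≤ (b - mn) % d))).mergeSort
        (fun a b => decide ((a - mn) / d ≤ (b - mn) / d)))).Pairwise (· ≤ ·) := by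
  set ler : ℤ → ℤ → Bool := fun a b => decide ((a - mn) % d ≤ (b - mn) % d) with hler
  set leq : ℤ → ℤ → Bool := fun a b => decide ((a - mn) / d ≤ (b - mn) / d) with hleq
  have transr : ∀ (a b c : ℤ), ler a b → ler b c → ler a c := by
    intro a b c; simp only [hler, decide_eq_true_eq]; omega
  have totalr : ∀ (a b : ℤ), ler a b || ler b a := by
    intro a b; simp only [hler, Bool.or_eq_true, decide_eq_true_eq]; omega
  have transq : ∀ (a b c : ℤ), leq a b → leq b c → leq a c := by
    intro a b c; simp only [hleq, decide_eq_true_eq]; omega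
  have totalq : ∀ (a b : ℤ), leq a b || leq b a := by
    intro a b; simp only [hleq, Bool.or_eq_true, decide_eq_true_eq]; omega
  set L1 : List ℤ := S.mergeSort ler with hL1
  set F : List ℤ := L1.mergeSort leq with hF
  have h1 : L1.Pairwise (fun a b => ler a b) := List.pairwise_mergeSort transr totalr S
  have hq : F.Pairwise (fun a b => leq a b) := List.pairwise_mergeSort transq totalq L1
  rw [List.pairwise_iff_forall_sublist]
  intro x y hxy
  have hqxy : (x - mn) / d ≤ (y - mn) / d := by
    have := (List.pairwise_iff_forall_sublist.mp hq) hxy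
    simpa [hleq] using this
  have hx : d * ((x - mn) / d) + (x - mn) % d = x - mn := Int.mul_ediv_add_emod _ _
  have hy : d * ((y - mn) / d) + (y - mn) % d = y - mn := Int.mul_ediv_add_emod _ _
  have hrx0 : 0 ≤ (x - mn) % d := Int.emod_nonneg _ (by omega)
  have hrxd : (x - mn) % d < d := Int.emod_lt_of_pos _ hd
  have hry0 : 0 ≤ (y - mn) % d := Int.emod_nonneg _ (by omega)
  rcases lt_or_eq_of_le hqxy with hlt | heqq
  · -- strict quotient inequality
    have h2 : d * ((x - mn) / d + 1) ≤ d * ((y - mn) / d) :=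
      mul_le_mul_of_nonneg_left (by omega) (le_of_lt hd)
    have h3 : d * ((x - mn) / d + 1) = d * ((x - mn) / d) + d := by ring
    linarith
  · -- quotient tie: use stability and the first (remainder) sort
    have hr : (x - mn) % d ≤ (y - mn) % d := by
      by_contra hcon
      push_neg at hcon
      set p : ℤ → Bool := fun z => decide (z = x ∨ z = y) with hp
      set c : List ℤ := L1.filter p with hc
      have hcsub : c.Sublist L1 := List.filter_sublist (l := L1)
      have hcr : c.Pairwise (fun a b => ler a b) := h1.sublist hcsub
      have hmemc : ∀ z ∈ c, z = x ∨ z = y := by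
        intro z hz
        have := (List.mem_filter.mp hz).2
        simpa [hp] using this
      have hcq : c.Pairwise (fun a b => leq a b) := by
        rw [List.pairwise_iff_forall_sublist]
        intro a b hab
        have ha := hmemc a (hab.subset (by simp))
        have hb := hmemc b (hab.subset (by simp))
        simp only [hleq, decide_eq_true_eq]
        rcases ha with rfl | rfl <;> rcases hb with rfl | rfl <;> omega
      have hcF : c.Sublist F := List.sublist_mergeSort transq totalq hcq hcsub
      have hcself : c.filter p = c := List.filter_eq_self.mpr (fun a ha => by
        have := (List.mem_filter.mp ha).2; exact this)
      have hcFf : c.Sublist (F.filter p) := hcself ▸ hcF.filter p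
      have hpermF : F.Perm L1 := List.mergeSort_perm L1 leq
      have hlen : (F.filter p).length = c.length := (hpermF.filter p).length_eq
      have heqc : c = F.filter p := hcFf.eq_of_length hlen.symm
      have hxyF : ([x, y]).Sublist (F.filter p) := by
        have : ([x, y].filter p).Sublist (F.filter p) := hxy.filter p
        simpa [hp] using this
      rw [← heqc] at hxyF
      have := (List.pairwise_iff_forall_sublist.mp hcr) hxyF
      simp only [hler, decide_eq_true_eq] at this
      omega
    rw [heqq] at hx
    linarith
end

section
/- Two successive stable sorts, first by a key r and then by a key q, produce a list sorted by the lexicographic key (q, r). -/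
private lemma qle_trans {α β : Type*} [LinearOrder β] (q : α → β) :
    ∀ (a b c : α), decide (q a ≤ q b) → decide (q b ≤ q c) → decide (q a ≤ q c) := by
  intro a b c h1 h2
  simp only [decide_eq_true_eq] at *
  exact le_trans h1 h2

private lemma qle_total {α β : Type*} [LinearOrder β] (q : α → β) :
    ∀ (a b : α), decide (q a ≤ q b) || decide (q b ≤ q a) := by
  intro a b
  simp [le_total]

/-- From pairwise-r on each q-fiber, get pairwise (q equal → r ≤). -/
private lemma pairwise_of_filter {α β : Type*} [LinearOrder β] (r q : α → β) :
    ∀ (l : List α),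
      (∀ v : β, (l.filter (fun x => decide (q x = v))).Pairwise (fun a b => r a ≤ r b)) →
      l.Pairwise (fun a b => q a = q b → r a ≤ r b)
  | [], _ => List.Pairwise.nil
  | x :: t, h => by
    constructor
    · intro b hb hqb
      have := h (q x)
      rw [List.filter_cons] at this
      simp only [decide_true, if_true] at this
      rw [List.pairwise_cons] at this
      exact this.1 b (List.mem_filter.mpr ⟨hb, by simp [hqb]⟩)
    · apply pairwise_of_filter r q t
      intro v
      have hs : List.Sublist (t.filter (fun x => decide (q x = v)))
          ((x :: t).filter (fun x => decide (q x = v))) :=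
        (List.sublist_cons_self x t).filter _
      exact (h v).sublist hs

theorem double_stable_sort_lex {α β : Type*} [LinearOrder β]
    (r q : α → β) (l : List α) :
    ((l.mergeSort (fun a b => decide (r a ≤ r b))).mergeSort
        (fun a b => decide (q a ≤ q b))).Pairwise
      (fun a b => q a < q b ∨ (q a = q b ∧ r a ≤ r b)) := by
  set L₁ := l.mergeSort (fun a b => decide (r a ≤ r b)) with hL₁
  set L₂ := L₁.mergeSort (fun a b => decide (q a ≤ q b)) with hL₂
  -- L₂ is sorted by q
  have hq : L₂.Pairwise (fun a b => q a ≤ q b) := by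
    have := List.pairwise_mergeSort (qle_trans q) (qle_total q) L₁
    rw [← hL₂] at this
    exact this.imp (by simp)
  -- L₁ is sorted by r
  have hr1 : L₁.Pairwise (fun a b => r a ≤ r b) := by
    have := List.pairwise_mergeSort (qle_trans r) (qle_total r) l
    rw [← hL₁] at this
    exact this.imp (by simp)
  -- filter stability: fibers of q agree in L₁ and L₂
  have hfil : ∀ v : β, L₂.filter (fun x => decide (q x = v)) =
      L₁.filter (fun x => decide (q x = v)) := by
    intro v
    set p : α → Bool := fun x => decide (q x = v) with hp
    set c := L₁.filter p with hc'
    have hmem : ∀ x ∈ c, q x = v := by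
      intro x hx
      have := (List.mem_filter.mp hx).2
      simpa [hp] using this
    have hc : c.Pairwise (fun a b => decide (q a ≤ q b)) := by
      apply List.pairwise_of_forall_mem_list
      intro a ha b hb
      simp [hmem a ha, hmem b hb]
    have hsub : List.Sublist c L₂ :=
      List.sublist_mergeSort (qle_trans q) (qle_total q) hc (List.filter_sublist)
    have hsub2 : List.Sublist c (L₂.filter p) := by
      have : c.filter p = c := List.filter_eq_self.mpr (by
        intro x hx; simp [hp, hmem x hx])
      rw [← this]
      exact hsub.filter p
    have hlen : (L₂.filter p).length = c.length := by
      have : List.Perm L₂ L₁ := List.mergeSort_perm L₁ _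
      exact (this.filter p).length_eq
    exact (hsub2.eq_of_length hlen.symm).symm
  have hS : L₂.Pairwise (fun a b => q a = q b → r a ≤ r b) := by
    apply pairwise_of_filter r q L₂
    intro v
    rw [hfil v]
    exact hr1.sublist (List.filter_sublist)
  apply (hq.and hS).imp
  rintro a b ⟨hle, himp⟩
  rcases lt_or_eq_of_le hle with h | h
  · exact Or.inl h
  · exact Or.inr ⟨h, himp h⟩
end
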